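/- The piecewise-linear cdf built from a histogram is exact at the bin edges: let x : Fin (I+1) → ℝ be a strictly increasing grid, and let Z : Fin P → ℝ and W : Fin P → ℝ be particle positions and weights such that x(0) < Z(p) < x(I) and Z(p) ≠ x(i) for every particle p and grid point i. Define the histogram ρ(i) = Σ_{p : x(i) < Z(p) < x(i+1)} W(p) for i = 0, …, I−1. Then for every i ∈ {0, …, I}, Σ_{j < i} ρ(j) = Σ_{p : Z(p) < x(i)} W(p); that is, the cumulative histogram at each bin edge equals the empirical cumulative distribution function of the weighted ensemble evaluated at that edge. -/

import Mathlib

/-- The piecewise-linear cdf built from a histogram is exact at the bin edges: if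
`x : Fin (I+1) → ℝ` is a strictly increasing grid, each particle position `Z p` lies
strictly between `x 0` and `x I` and avoids all grid points, and the histogram is
`ρ i = ∑_{p : x i < Z p < x (i+1)} W p`, then for every bin edge `i`,
`∑_{j < i} ρ j = ∑_{p : Z p < x i} W p`. -/
theorem histogram_cdf_exact_at_bin_edges
    (I P : ℕ) (x : Fin (I + 1) → ℝ) (hx : StrictMono x)
    (Z W : Fin P → ℝ)
    (hZ : ∀ p, x 0 < Z p ∧ Z p < x (Fin.last I))
    (hne : ∀ p i, Z p ≠ x i)
    (ρ : Fin I → ℝ)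
    (hρ : ∀ i : Fin I, ρ i =
      ∑ p ∈ Finset.univ.filter (fun p => x i.castSucc < Z p ∧ Z p < x i.succ), W p) :
    ∀ i : Fin (I + 1),
      (∑ j ∈ Finset.univ.filter (fun j : Fin I => (j : ℕ) < (i : ℕ)), ρ j) =
        ∑ p ∈ Finset.univ.filter (fun p => Z p < x i), W p := by
  intro i
  induction i using Fin.induction with
  | zero =>
    rw [Finset.filter_false_of_mem (fun j _ => by simp),
        Finset.filter_false_of_mem (fun p _ => not_lt.2 (hZ p).1.le)]
    simp
  | succ i ih =>
    have hsplit : (Finset.univ.filter (fun j : Fin I => (j : ℕ) < (i.succ : ℕ)))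
        = insert i (Finset.univ.filter (fun j : Fin I => (j : ℕ) < (i.castSucc : ℕ))) := by
      ext j
      simp [Fin.ext_iff, Nat.lt_succ_iff_lt_or_eq, or_comm]
      rw [Fin.le_iff_val_le_val, Fin.lt_iff_val_lt_val]; omega
    rw [hsplit, Finset.sum_insert (by simp), ih, hρ i, add_comm]
    rw [← Finset.sum_union]
    · congr 1
      ext p
      simp only [Finset.mem_union, Finset.mem_filter, Finset.mem_univ, true_and]
      constructor
      · rintro (h | ⟨h1, h2⟩)
        · exact h.trans (hx (Fin.castSucc_lt_succ : i.castSucc < i.succ))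
        · exact h2
      · intro h
        rcases lt_or_gt_of_ne (hne p i.castSucc) with h1 | h1
        · exact Or.inl h1
        · exact Or.inr ⟨h1, h⟩
    · rw [Finset.disjoint_filter]
      intro p _ h1 h2
      exact absurd (h1.trans h2.1) (lt_irrefl _)
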